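/- Let R be a ring, let F, G : ModuleCat R ⥤ ModuleCat R be additive functors such that G preserves monomorphisms, and let α : F ⟶ G be a natural transformation. Let M be an R-module and let N₁, N₂ be submodules of M such that the components of α at the quotient modules M ⧸ N₁ and M ⧸ N₂ (regarded as objects of ModuleCat R) are zero. Then the component of α at M ⧸ (N₁ ⊓ N₂) is zero. -/

import Mathlib

open CategoryTheory CategoryTheory.Limits

universe u

/-- If `α.app A = 0` and `α.app B = 0`, then `α.app (A ⊞ B) = 0` for additive functors. -/
theorem natTrans_app_biprod_zero {C D : Type*} [Category C] [Category D]
    [Preadditive C] [Preadditive D] [HasBinaryBiproducts C]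
    {F G : C ⥤ D} [F.Additive] [G.Additive] (α : F ⟶ G) (A B : C)
    (h₁ : α.app A = 0) (h₂ : α.app B = 0) : α.app (A ⊞ B) = 0 := by
  have hfst : α.app (A ⊞ B) ≫ G.map biprod.fst = 0 := by
    rw [← α.naturality, h₁, Limits.comp_zero]
  have hsnd : α.app (A ⊞ B) ≫ G.map biprod.snd = 0 := by
    rw [← α.naturality, h₂, Limits.comp_zero]
  calc α.app (A ⊞ B) = α.app (A ⊞ B) ≫ G.map (𝟙 (A ⊞ B)) := by simp
    _ = α.app (A ⊞ B) ≫ G.map (biprod.fst ≫ biprod.inl + biprod.snd ≫ biprod.inr) := by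
        rw [biprod.total]
    _ = (α.app (A ⊞ B) ≫ G.map biprod.fst) ≫ G.map biprod.inl
        + (α.app (A ⊞ B) ≫ G.map biprod.snd) ≫ G.map biprod.inr := by
        rw [Functor.map_add, Preadditive.comp_add, G.map_comp, G.map_comp]
        simp [Category.assoc]
    _ = 0 := by rw [hfst, hsnd]; simp

/-- If a natural transformation `α : F ⟶ G` between additive endofunctors of `ModuleCat R`,
with `G` preserving monomorphisms, annihilates the quotients `M ⧸ N₁` and `M ⧸ N₂`, then it
annihilates `M ⧸ (N₁ ⊓ N₂)`. -/
theorem natTrans_app_quotient_inf_zero (R : Type u) [Ring R]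
    (F G : ModuleCat.{u} R ⥤ ModuleCat.{u} R) [F.Additive] [G.Additive]
    [G.PreservesMonomorphisms] (α : F ⟶ G)
    (M : Type u) [AddCommGroup M] [Module R M] (N₁ N₂ : Submodule R M)
    (h₁ : α.app (ModuleCat.of R (M ⧸ N₁)) = 0)
    (h₂ : α.app (ModuleCat.of R (M ⧸ N₂)) = 0) :
    α.app (ModuleCat.of R (M ⧸ (N₁ ⊓ N₂))) = 0 := by
  let X := ModuleCat.of R (M ⧸ (N₁ ⊓ N₂))
  let A := ModuleCat.of R (M ⧸ N₁)
  let B := ModuleCat.of R (M ⧸ N₂)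
  let f₁ : X ⟶ A := ModuleCat.ofHom (Submodule.mapQ (N₁ ⊓ N₂) N₁ LinearMap.id inf_le_left)
  let f₂ : X ⟶ B := ModuleCat.ofHom (Submodule.mapQ (N₁ ⊓ N₂) N₂ LinearMap.id inf_le_right)
  let i : X ⟶ A ⊞ B := biprod.lift f₁ f₂
  have happ₁ : ∀ x : X, f₁ x = (biprod.fst : A ⊞ B ⟶ A) (i x) := by
    intro x
    rw [show f₁ = i ≫ biprod.fst from (biprod.lift_fst f₁ f₂).symm,
      ConcreteCategory.comp_apply]
  have happ₂ : ∀ x : X, f₂ x = (biprod.snd : A ⊞ B ⟶ B) (i x) := by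
    intro x
    rw [show f₂ = i ≫ biprod.snd from (biprod.lift_snd f₁ f₂).symm,
      ConcreteCategory.comp_apply]
  have hmono : Mono i := by
    rw [ModuleCat.mono_iff_injective]
    rw [← LinearMap.ker_eq_bot (f := i.hom)]
    rw [LinearMap.ker_eq_bot']
    intro x hx
    obtain ⟨m, rfl⟩ := Submodule.mkQ_surjective _ x
    have hA : f₁ (Submodule.mkQ _ m) = 0 := by rw [happ₁, hx, map_zero]
    have hB : f₂ (Submodule.mkQ _ m) = 0 := by rw [happ₂, hx, map_zero]
    have hm1 : m ∈ N₁ := (Submodule.Quotient.mk_eq_zero N₁).mp hA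
    have hm2 : m ∈ N₂ := (Submodule.Quotient.mk_eq_zero N₂).mp hB
    exact (Submodule.Quotient.mk_eq_zero _).mpr (Submodule.mem_inf.mpr ⟨hm1, hm2⟩)
  have hGi : Mono (G.map i) := G.map_mono i
  have key : α.app X ≫ G.map i = 0 := by
    rw [← α.naturality, natTrans_app_biprod_zero α A B h₁ h₂, Limits.comp_zero]
  have : α.app X = 0 := by rw [← cancel_mono (G.map i), key, Limits.zero_comp]
  exact this
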